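/- Let {α_k}_{k≥0} be a nonincreasing sequence of nonnegative reals with ∑_{k=0}^∞ α_k² < ∞, and let β ∈ (0,1). Then ∑_{k=1}^∞ α_k (∑_{s=1}^k β^{k−s} α_{s−1}) < ∞ and ∑_{k=0}^∞ α_k β^k < ∞. -/

import Mathlib

/-- For a nonincreasing nonnegative sequence `α` with `∑ α_k² < ∞` and
`β ∈ (0,1)`, both `∑_k α_k (∑_{s=1}^k β^(k-s) α_{s-1})` and `∑_k α_k β^k` are finite. -/
theorem stmt_5 (α : ℕ → ℝ) (hnn : ∀ k, 0 ≤ α k) (hmono : ∀ k, α (k + 1) ≤ α k)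
    (hsq : Summable (fun k => α k ^ 2)) (β : ℝ) (hβ0 : 0 < β) (hβ1 : β < 1) :
    Summable (fun k => α k * ∑ s ∈ Finset.Icc 1 k, β ^ (k - s) * α (s - 1)) ∧
      Summable (fun k => α k * β ^ k) := by
  have hanti : Antitone α := antitone_nat_of_succ_le hmono
  have hgeo : Summable (fun k => β ^ k) := summable_geometric_of_lt_one hβ0.le hβ1
  have htsum : ∑' n : ℕ, β ^ n = (1 - β)⁻¹ := tsum_geometric_of_lt_one hβ0.le hβ1
  set T : ℕ → ℝ := fun k => ∑ s ∈ Finset.Icc 1 k, β ^ (k - s) * α (s - 1) ^ 2 with hTdef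
  have hTrange : ∀ k, T k = ∑ i ∈ Finset.range k, β ^ (k - 1 - i) * α i ^ 2 := by
    intro k
    rw [hTdef]
    simp only
    rw [← Finset.Ico_add_one_right_eq_Icc, Finset.sum_Ico_eq_sum_range]
    refine Finset.sum_congr rfl fun i _ => ?_
    have e1 : k - (1 + i) = k - 1 - i := by omega
    have e2 : 1 + i - 1 = i := by omega
    rw [e1, e2]
  have hT : Summable T := by
    rw [← summable_nat_add_iff 1]
    have hc : Summable (fun n => ∑ kl ∈ Finset.HasAntidiagonal.antidiagonal n,
        (fun m => α m ^ 2) kl.1 * (fun m => β ^ m) kl.2) := by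
      have h1 : Summable (fun n => ‖α n ^ 2‖) := by
        simp only [Real.norm_eq_abs, abs_pow, sq_abs]; exact hsq
      have h2 : Summable (fun n => ‖β ^ n‖) := by
        simp only [Real.norm_eq_abs, abs_pow, abs_of_pos hβ0]; exact hgeo
      exact (summable_norm_sum_mul_antidiagonal_of_summable_norm h1 h2).of_norm
    refine hc.congr fun n => ?_
    rw [Finset.Nat.sum_antidiagonal_eq_sum_range_succ_mk, hTrange]
    refine Finset.sum_congr rfl fun i hi => ?_
    simp only
    have e : n + 1 - 1 - i = n - i := by omega
    rw [mul_comm, e]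
  have hgs : ∀ k, ∑ s ∈ Finset.Icc 1 k, β ^ (k - s) ≤ (1 - β)⁻¹ := by
    intro k
    have h1 : ∑ s ∈ Finset.Icc 1 k, β ^ (k - s) = ∑ i ∈ Finset.range k, β ^ i := by
      rw [← Finset.Ico_add_one_right_eq_Icc, Finset.sum_Ico_eq_sum_range]
      rw [← Finset.sum_range_reflect (fun i => β ^ i) k]
      exact Finset.sum_congr rfl fun i _ => by congr 1; omega
    rw [h1, ← htsum]
    exact Summable.sum_le_tsum _ (fun i _ => pow_nonneg hβ0.le _) hgeo
  constructor
  · refine Summable.of_nonneg_of_le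
      (fun k => mul_nonneg (hnn k) (Finset.sum_nonneg fun s _ =>
        mul_nonneg (pow_nonneg hβ0.le _) (hnn _)))
      (fun k => ?_)
      (((hT.div_const 2).add ((hsq.div_const 2).mul_right (1 - β)⁻¹)))
    calc α k * ∑ s ∈ Finset.Icc 1 k, β ^ (k - s) * α (s - 1)
        = ∑ s ∈ Finset.Icc 1 k, β ^ (k - s) * (α k * α (s - 1)) := by
          rw [Finset.mul_sum]; exact Finset.sum_congr rfl fun s _ => by ring
      _ ≤ ∑ s ∈ Finset.Icc 1 k, β ^ (k - s) * ((α (s - 1) ^ 2 + α k ^ 2) / 2) := by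
          refine Finset.sum_le_sum fun s _ => ?_
          refine mul_le_mul_of_nonneg_left ?_ (pow_nonneg hβ0.le _)
          nlinarith [sq_nonneg (α k - α (s - 1))]
      _ = T k / 2 + α k ^ 2 / 2 * ∑ s ∈ Finset.Icc 1 k, β ^ (k - s) := by
          rw [hTdef]
          simp only
          rw [Finset.sum_div, Finset.mul_sum, ← Finset.sum_add_distrib]
          exact Finset.sum_congr rfl fun s _ => by ring
      _ ≤ T k / 2 + α k ^ 2 / 2 * (1 - β)⁻¹ := by
          have := hgs k
          have h2 : (0:ℝ) ≤ α k ^ 2 / 2 := by positivity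
          nlinarith
  · refine Summable.of_nonneg_of_le
      (fun k => mul_nonneg (hnn k) (pow_nonneg hβ0.le _))
      (fun k => ?_) (hgeo.mul_left (α 0))
    exact mul_le_mul_of_nonneg_right (hanti (Nat.zero_le k)) (pow_nonneg hβ0.le _)
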